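/- Let G be an outerplanar graph, let S be a 2-dominating set of G with |S| = x, and let T = V(G) \ S with |T| = y. Then y ≤ 2x − 2. -/

import Mathlib

open SimpleGraph

variable {V : Type*}

/-- `S` is a total dominating set of `G`: every vertex has a neighbor in `S`. -/
def TotalDom (G : SimpleGraph V) (S : Set V) : Prop :=
  ∀ v : V, ∃ u ∈ S, G.Adj v u

/-- `v ∈ S` totally `S`-defends `u ∉ S`. -/
def Defends (G : SimpleGraph V) (S : Set V) (v u : V) : Prop :=
  G.Adj u v ∧ TotalDom G ((S \ {v}) ∪ {u})

/-- `S` is a secure total dominating set of `G`. -/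
def STDS (G : SimpleGraph V) (S : Set V) : Prop :=
  TotalDom G S ∧ ∀ u ∉ S, ∃ v ∈ S, Defends G S v u

/-- `S` is a 2-dominating set of `G`. -/
def TwoDom (G : SimpleGraph V) (S : Set V) : Prop :=
  ∀ v ∉ S, 2 ≤ (S ∩ G.neighborSet v).ncard

/-- external private neighborhood of `v` with respect to `S`. -/
def epn (G : SimpleGraph V) (v : V) (S : Set V) : Set V :=
  {w | w ∉ S ∧ G.neighborSet w ∩ S = {v}}

/-- internal private neighborhood of `v` with respect to `S`. -/
def ipn (G : SimpleGraph V) (v : V) (S : Set V) : Set V :=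
  {u | u ∈ S ∧ G.neighborSet u ∩ S = {v}}

/-- secure total domination number. -/
noncomputable def gammaSt (G : SimpleGraph V) : ℕ :=
  sInf {n | ∃ S : Set V, STDS G S ∧ S.ncard = n}

/-- `G` contains a subgraph that is a subdivision of `K`:  there is an injective map of
branch vertices together with pairwise internally disjoint paths joining them. -/
def ContainsSubdivision {W : Type*} (K : SimpleGraph W) (G : SimpleGraph V) : Prop :=
  ∃ (f : W → V) (p : ∀ a b, K.Adj a b → G.Walk (f a) (f b)),
    Function.Injective f ∧
    (∀ a b (h : K.Adj a b), (p a b h).IsPath) ∧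
    (∀ a b (h : K.Adj a b), ∀ w ∈ (p a b h).support, w ∈ Set.range f → w = f a ∨ w = f b) ∧
    (∀ a b c d (h₁ : K.Adj a b) (h₂ : K.Adj c d), s(a, b) ≠ s(c, d) →
      ∀ w, w ∈ (p a b h₁).support → w ∈ (p c d h₂).support → w ∈ Set.range f)

/-- outerplanar graphs: no subdivision of `K₄` nor of `K₂,₃` as a subgraph. -/
def Outerplanar (G : SimpleGraph V) : Prop :=
  ¬ ContainsSubdivision (completeGraph (Fin 4)) G ∧
  ¬ ContainsSubdivision (completeBipartiteGraph (Fin 2) (Fin 3)) G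

/-- maximal outerplanar graphs: adding any edge destroys outerplanarity. -/
def MaximalOuterplanar (G : SimpleGraph V) : Prop :=
  Outerplanar G ∧
  ∀ u v : V, u ≠ v → ¬ G.Adj u v →
    ¬ Outerplanar (G ⊔ SimpleGraph.fromEdgeSet {s(u, v)})

section Aux
open scoped Classical
variable {W : Type*}

def GoodMid (G H : SimpleGraph V) (mid : Sym2 V → Option V) : Prop :=
  ∀ ⦃a b : V⦄, H.Adj a b →
    (mid s(a, b)).elim (G.Adj a b) (fun t => G.Adj a t ∧ G.Adj t b)

variable {G H : SimpleGraph V} {mid : Sym2 V → Option V}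

noncomputable def expandWalk (hm : GoodMid G H mid) : ∀ {a b : V}, H.Walk a b → G.Walk a b
  | _, _, SimpleGraph.Walk.nil => SimpleGraph.Walk.nil
  | a, _, SimpleGraph.Walk.cons (v := c) h q =>
    (match mid s(a, c), hm h with
     | none, hadj => SimpleGraph.Walk.cons hadj (expandWalk hm q)
     | some _, ⟨h1, h2⟩ => SimpleGraph.Walk.cons h1 (SimpleGraph.Walk.cons h2 (expandWalk hm q)))

lemma mem_support_expandWalk (hm : GoodMid G H mid) {a b : V} (w : H.Walk a b) (x : V) :
    x ∈ (expandWalk hm w).support ↔ x ∈ w.support ∨ ∃ e ∈ w.edges, mid e = some x := by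
  induction w with
  | nil => simp [expandWalk]
  | @cons a c b h q ih =>
    simp only [expandWalk]
    split
    · rename_i hadj heqn hheq
      dsimp only [Option.elim] at hadj
      simp only [Walk.support_cons, Walk.edges_cons, List.mem_cons, ih]
      constructor
      · rintro (rfl | hx | ⟨e, he, hme⟩)
        · exact Or.inl (Or.inl rfl)
        · exact Or.inl (Or.inr hx)
        · exact Or.inr ⟨e, Or.inr he, hme⟩
      · rintro ((rfl | hx) | ⟨e, (rfl | he), hme⟩)
        · exact Or.inl rfl
        · exact Or.inr (Or.inl hx)
        · rw [heqn] at hme; cases hme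
        · exact Or.inr (Or.inr ⟨e, he, hme⟩)
    · rename_i heqn hheq
      simp only [Walk.support_cons, Walk.edges_cons, List.mem_cons, ih]
      constructor
      · rintro (rfl | rfl | hx | ⟨e, he, hme⟩)
        · exact Or.inl (Or.inl rfl)
        · exact Or.inr ⟨s(a, c), Or.inl rfl, heqn⟩
        · exact Or.inl (Or.inr hx)
        · exact Or.inr ⟨e, Or.inr he, hme⟩
      · rintro ((rfl | hx) | ⟨e, (rfl | he), hme⟩)
        · exact Or.inl rfl
        · exact Or.inr (Or.inr (Or.inl hx))
        · rw [heqn] at hme; cases hme; exact Or.inr (Or.inl rfl)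
        · exact Or.inr (Or.inr (Or.inr ⟨e, he, hme⟩))

lemma isPath_expandWalk (hm : GoodMid G H mid) {a b : V} {w : H.Walk a b} (hw : w.IsPath)
    (hmid : ∀ e ∈ w.edges, ∀ t, mid e = some t →
      t ∉ w.support ∧ ∀ e' ∈ w.edges, mid e' = some t → e' = e) :
    (expandWalk hm w).IsPath := by
  induction w with
  | nil => simp [expandWalk]
  | @cons a c b h q ih =>
    rw [Walk.cons_isPath_iff] at hw
    have hq : (expandWalk hm q).IsPath := by
      refine ih hw.1 (fun e he t hmt => ⟨fun hts => (hmid e (by simp [he]) t hmt).1 (by simp [hts]),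
        fun e' he' hmt' => (hmid e (by simp [he]) t hmt).2 e' (by simp [he']) hmt'⟩)
    simp only [expandWalk]
    split
    · rename_i hadj heqn hheq
      dsimp only [Option.elim] at hadj
      rw [Walk.cons_isPath_iff]
      refine ⟨hq, ?_⟩
      rw [mem_support_expandWalk]
      rintro (ha | ⟨e, he, hme⟩)
      · exact hw.2 ha
      · exact (hmid e (by simp [he]) a hme).1 (by simp)
    · rename_i heqn hheq
      rw [Walk.cons_isPath_iff, Walk.cons_isPath_iff]
      refine ⟨⟨hq, ?_⟩, ?_⟩
      · rw [mem_support_expandWalk]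
        rintro (hts | ⟨e, he, hme⟩)
        · exact (hmid s(a, c) (by simp) _ heqn).1 (by simp [hts])
        · have he2 : e = s(a, c) := (hmid s(a, c) (by simp) _ heqn).2 e (by simp [he]) hme
          exact hw.2 (q.fst_mem_support_of_mem_edges (he2 ▸ he))
      · simp only [Walk.support_cons, List.mem_cons]
        rintro (rfl | has)
        · exact (hmid s(a, c) (by simp) _ heqn).1 (by simp)
        · rw [mem_support_expandWalk] at has
          rcases has with ha | ⟨e, he, hme⟩
          · exact hw.2 ha
          · exact (hmid e (by simp [he]) a hme).1 (by simp)

lemma walk_support_mem_graph_support' {a b : V} (w : H.Walk a b) {x : V}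
    (hx : x ∈ w.support) : x ∈ H.support ∨ x = b := by
  induction w with
  | nil => simp at hx; exact Or.inr hx
  | @cons a c b h q ih =>
    rcases (by simpa using hx : x = a ∨ x ∈ q.support) with rfl | hx'
    · exact Or.inl ⟨c, h⟩
    · exact ih hx'

lemma walk_support_mem_graph_support {a b : V} (w : H.Walk a b) (hab : a ≠ b) {x : V}
    (hx : x ∈ w.support) : x ∈ H.support := by
  rcases walk_support_mem_graph_support' w hx with h1 | rfl
  · exact h1
  · have hx' : x ∈ w.reverse.support := by
      rw [SimpleGraph.Walk.support_reverse, List.mem_reverse]; exact hx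
    rcases walk_support_mem_graph_support' w.reverse hx' with h1 | rfl
    · exact h1
    · exact absurd rfl hab

lemma subdiv_expand {K : SimpleGraph W} (hm : GoodMid G H mid)
    (hKd : ∀ a : W, ∃ b, K.Adj a b)
    (hmS : ∀ e t, mid e = some t → t ∉ H.support)
    (hminj : ∀ e ∈ H.edgeSet, ∀ e' ∈ H.edgeSet, ∀ t, mid e = some t → mid e' = some t → e = e')
    (h : ContainsSubdivision K H) : ContainsSubdivision K G := by
  obtain ⟨f, p, hf, hpath, hint, hdisj⟩ := h
  have hfne : ∀ a b, K.Adj a b → f a ≠ f b := fun a b hab => hf.ne hab.ne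
  have hsupp : ∀ a b (hab : K.Adj a b) x, x ∈ (p a b hab).support → x ∈ H.support :=
    fun a b hab x hx => walk_support_mem_graph_support _ (hfne a b hab) hx
  have hrange : ∀ a : W, f a ∈ H.support := by
    intro a
    obtain ⟨b, hab⟩ := hKd a
    exact hsupp a b hab _ (Walk.start_mem_support _)
  refine ⟨f, fun a b hab => expandWalk hm (p a b hab), hf, ?_, ?_, ?_⟩
  · intro a b hab
    refine isPath_expandWalk hm (hpath a b hab) (fun e he t hmt => ?_)
    refine ⟨fun hts => hmS e t hmt (hsupp a b hab t hts), fun e' he' hmt' => ?_⟩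
    exact (hminj e' ((p a b hab).edges_subset_edgeSet he') e
      ((p a b hab).edges_subset_edgeSet he) t hmt' hmt).symm ▸ rfl
  · intro a b hab x hx hxr
    rw [mem_support_expandWalk] at hx
    rcases hx with hx | ⟨e, he, hme⟩
    · exact hint a b hab x hx hxr
    · obtain ⟨a', rfl⟩ := hxr
      exact absurd (hrange a') (hmS e _ hme)
  · intro a b c d h₁ h₂ hne x hx₁ hx₂
    rw [mem_support_expandWalk] at hx₁ hx₂
    rcases hx₁ with hx₁ | ⟨e, he, hme⟩
    · rcases hx₂ with hx₂ | ⟨e', he', hme'⟩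
      · exact hdisj a b c d h₁ h₂ hne x hx₁ hx₂
      · exact absurd (hsupp a b h₁ x hx₁) (hmS e' _ hme')
    · rcases hx₂ with hx₂ | ⟨e', he', hme'⟩
      · exact absurd (hsupp c d h₂ x hx₂) (hmS e _ hme)
      · -- both middles: the shared edge causes contradiction
        exfalso
        have hee' : e = e' := hminj e ((p a b h₁).edges_subset_edgeSet he) e'
          ((p c d h₂).edges_subset_edgeSet he') x hme hme'
        subst hee'
        induction e using Sym2.ind with
        | _ u v =>
          have huv : u ≠ v := (Walk.edges_subset_edgeSet _ he).ne
          have hu1 := (p a b h₁).fst_mem_support_of_mem_edges he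
          have hv1 := (p a b h₁).snd_mem_support_of_mem_edges he
          have hu2 := (p c d h₂).fst_mem_support_of_mem_edges he'
          have hv2 := (p c d h₂).snd_mem_support_of_mem_edges he'
          have hur : u ∈ Set.range f := hdisj a b c d h₁ h₂ hne u hu1 hu2
          have hvr : v ∈ Set.range f := hdisj a b c d h₁ h₂ hne v hv1 hv2
          have hu1' := hint a b h₁ u hu1 hur
          have hv1' := hint a b h₁ v hv1 hvr
          have hu2' := hint c d h₂ u hu2 hur
          have hv2' := hint c d h₂ v hv2 hvr
          have h1 : s(u, v) = s(f a, f b) := by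
            rcases hu1' with rfl | rfl <;> rcases hv1' with rfl | rfl <;>
              first | exact absurd rfl huv | simp [Sym2.eq_swap]
          have h2 : s(u, v) = s(f c, f d) := by
            rcases hu2' with rfl | rfl <;> rcases hv2' with rfl | rfl <;>
              first | exact absurd rfl huv | simp [Sym2.eq_swap]
          apply hne
          have : Sym2.map f s(a, b) = Sym2.map f s(c, d) := by
            simpa using h1.symm.trans h2
          exact Sym2.map.injective hf this

lemma subdiv_mono {K : SimpleGraph W} (hKd : ∀ a : W, ∃ b, K.Adj a b)
    (hHG : H ≤ G) (h : ContainsSubdivision K H) : ContainsSubdivision K G := by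
  refine subdiv_expand (mid := fun _ => none) (fun a b hab => hHG hab) hKd
    (fun e t ht => by simp at ht) (fun e _ e' _ t ht => by simp at ht) h

lemma subdiv_of_adj {K : SimpleGraph W} (f : W → V) (hf : Function.Injective f)
    (hadj : ∀ a b, K.Adj a b → G.Adj (f a) (f b)) : ContainsSubdivision K G := by
  refine ⟨f, fun a b h => Walk.cons (hadj a b h) Walk.nil, hf, ?_, ?_, ?_⟩
  · intro a b h
    simp [Walk.isPath_def, (hadj a b h).ne]
  · intro a b h x hx _
    simpa using hx
  · intro a b c d h1 h2 _ x hx1 _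
    rcases (by simpa using hx1 : x = f a ∨ x = f b) with rfl | rfl
    · exact ⟨a, rfl⟩
    · exact ⟨b, rfl⟩

def eraseVtx (H : SimpleGraph V) (v : V) : SimpleGraph V where
  Adj a b := H.Adj a b ∧ a ≠ v ∧ b ≠ v
  symm := ⟨fun a b ⟨h, ha, hb⟩ => ⟨h.symm, hb, ha⟩⟩
  loopless := ⟨fun a ⟨h, _, _⟩ => H.loopless.irrefl a h⟩

lemma eraseVtx_le (H : SimpleGraph V) (v : V) : eraseVtx H v ≤ H := fun _ _ h => h.1

lemma eraseVtx_adj (H : SimpleGraph V) (v a b : V) :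
    (eraseVtx H v).Adj a b ↔ H.Adj a b ∧ a ≠ v ∧ b ≠ v := Iff.rfl

lemma edgeSet_eraseVtx (H : SimpleGraph V) (v : V) :
    (eraseVtx H v).edgeSet = H.edgeSet \ H.incidenceSet v := by
  ext e
  induction e using Sym2.ind with
  | _ a b =>
    simp only [SimpleGraph.mem_edgeSet, eraseVtx_adj, Set.mem_diff,
      SimpleGraph.incidenceSet, Set.mem_setOf_eq, Sym2.mem_iff, SimpleGraph.mem_edgeSet]
    constructor
    · rintro ⟨h, ha, hb⟩
      exact ⟨h, fun ⟨_, h'⟩ => by rcases h' with rfl | rfl; exacts [ha rfl, hb rfl]⟩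
    · rintro ⟨h, h'⟩
      refine ⟨h, fun ha => h' ⟨h, Or.inl ha.symm⟩, fun hb => h' ⟨h, Or.inr hb.symm⟩⟩

lemma ncard_incidenceSet (H : SimpleGraph V) (v : V) :
    (H.incidenceSet v).ncard = (H.neighborSet v).ncard := by
  classical
  rw [← Nat.card_coe_set_eq, ← Nat.card_coe_set_eq]
  exact Nat.card_congr (H.incidenceSetEquivNeighborSet v)

lemma support_eraseVtx_subset (H : SimpleGraph V) (v : V) :
    (eraseVtx H v).support ⊆ H.support \ {v} :=
  fun _ ⟨b, h⟩ => ⟨⟨b, h.1⟩, h.2.1⟩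

lemma ncard_edgeSet_eraseVtx [Fintype V] (H : SimpleGraph V) (v : V) :
    (eraseVtx H v).edgeSet.ncard = H.edgeSet.ncard - (H.neighborSet v).ncard := by
  rw [edgeSet_eraseVtx, Set.ncard_diff (H.incidenceSet_subset v) (Set.toFinite _),
    ncard_incidenceSet]

lemma lemA_step (H : SimpleGraph V) (v x y : V) (hvx : H.Adj v x) (hvy : H.Adj v y)
    (hxy : x ≠ y)
    (h : ContainsSubdivision (completeGraph (Fin 4)) (eraseVtx H v ⊔ fromEdgeSet {s(x, y)})) :
    ContainsSubdivision (completeGraph (Fin 4)) H := by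
  classical
  set H' := eraseVtx H v ⊔ fromEdgeSet {s(x, y)} with hH'
  have hvns : v ∉ H'.support := by
    rintro ⟨z, hz⟩
    rcases hz with hz | hz
    · exact hz.2.1 rfl
    · rw [SimpleGraph.fromEdgeSet_adj] at hz
      have : v = x ∨ v = y := by
        have := hz.1
        simp only [Set.mem_singleton_iff, Sym2.eq_iff] at this
        rcases this with ⟨h1, _⟩ | ⟨h1, _⟩
        · exact Or.inl h1
        · exact Or.inr h1
      rcases this with rfl | rfl
      exacts [hvx.ne rfl, hvy.ne rfl]
  have hKd : ∀ a : Fin 4, ∃ b, (completeGraph (Fin 4)).Adj a b := by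
    have : ∀ a : Fin 4, ∃ b : Fin 4, a ≠ b := by decide
    intro a; obtain ⟨b, hb⟩ := this a; exact ⟨b, hb⟩
  refine subdiv_expand (H := H') (mid := fun e => if e = s(x, y) then some v else none)
    ?_ hKd ?_ ?_ h
  · intro a b hab
    by_cases he : s(a, b) = s(x, y)
    · simp only [he, if_pos rfl, Option.elim]
      rcases Sym2.eq_iff.mp he with ⟨rfl, rfl⟩ | ⟨rfl, rfl⟩
      · exact ⟨hvx.symm, hvy⟩
      · exact ⟨hvy.symm, hvx⟩
    · simp only [if_neg he, Option.elim]
      rcases hab with hab | hab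
      · exact hab.1
      · rw [SimpleGraph.fromEdgeSet_adj] at hab
        exact absurd (by simpa using hab.1) he
  · intro e t ht
    by_cases he : e = s(x, y) <;> simp [he] at ht
    exact ht ▸ hvns
  · intro e _ e' _ t ht ht'
    by_cases he : e = s(x, y)
    · by_cases he' : e' = s(x, y)
      · rw [he, he']
      · simp [he'] at ht'
    · simp [he] at ht

lemma exists_deg_le_three [Fintype V] (H : SimpleGraph V)
    (hm : H.edgeSet.ncard < 2 * H.support.ncard) :
    ∃ v ∈ H.support, 1 ≤ (H.neighborSet v).ncard ∧ (H.neighborSet v).ncard ≤ 3 := by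
  classical
  by_contra hc
  push_neg at hc
  have h4 : ∀ v ∈ H.support, 4 ≤ (H.neighborSet v).ncard := by
    intro v hv
    have h1 : 1 ≤ (H.neighborSet v).ncard := by
      obtain ⟨w, hw⟩ := hv
      have : (H.neighborSet v).Nonempty := ⟨w, hw⟩
      rwa [← Set.ncard_pos (Set.toFinite _)] at this
    have := hc v hv h1
    omega
  have hdeg : ∀ v : V, H.degree v = (H.neighborSet v).ncard := by
    intro v
    rw [← H.card_neighborSet_eq_degree, Set.ncard_eq_toFinset_card', Set.toFinset_card]
  have hsum0 : ∑ v, (H.neighborSet v).ncard = 2 * H.edgeFinset.card := by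
    rw [← SimpleGraph.sum_degrees_eq_twice_card_edges]
    exact Finset.sum_congr rfl (fun v _ => (hdeg v).symm)
  have hsum : ∑ v ∈ H.support.toFinset, (H.neighborSet v).ncard = 2 * H.edgeSet.ncard := by
    rw [show H.edgeSet.ncard = H.edgeFinset.card by
      rw [Set.ncard_eq_toFinset_card', Set.toFinset_card, ← SimpleGraph.edgeFinset_card]]
    rw [← hsum0]
    refine Finset.sum_subset (Finset.subset_univ _) ?_
    intro u _ hu
    simp only [Set.mem_toFinset] at hu
    have : H.neighborSet u = ∅ := by
      ext z; simp only [SimpleGraph.mem_neighborSet, Set.mem_empty_iff_false, iff_false]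
      exact fun hz => hu ⟨z, hz⟩
    rw [this]; simp
  have hub : H.support.toFinset.card * 4 ≤ ∑ v ∈ H.support.toFinset, (H.neighborSet v).ncard := by
    have := Finset.card_nsmul_le_sum H.support.toFinset (fun v => (H.neighborSet v).ncard) 4
      (fun x hx => h4 x (Set.mem_toFinset.mp hx))
    simpa [smul_eq_mul] using this
  have hn : H.support.ncard = H.support.toFinset.card := Set.ncard_eq_toFinset_card' _
  omega

lemma ncard_edgeSet_sup_single [Fintype V] (H₀ : SimpleGraph V) (x y : V) (hxy : x ≠ y)
    (hna : ¬H₀.Adj x y) :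
    (H₀ ⊔ fromEdgeSet {s(x, y)}).edgeSet.ncard = H₀.edgeSet.ncard + 1 := by
  rw [SimpleGraph.edgeSet_sup, SimpleGraph.edgeSet_fromEdgeSet, Sym2.diagSet_eq_setOfPred_isDiag]
  have h1 : ({s(x, y)} : Set (Sym2 V)) \ {e | e.IsDiag} = {s(x, y)} := by
    ext e; simp only [Set.mem_diff, Set.mem_singleton_iff, Set.mem_setOf_eq]
    constructor
    · exact fun h => h.1
    · rintro rfl; exact ⟨rfl, by simp [hxy]⟩
  rw [h1, Set.union_singleton, Set.ncard_insert_of_notMem (by simpa using hna) (Set.toFinite _)]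

lemma support_step_subset (H : SimpleGraph V) (v x y : V) (hvx : H.Adj v x) (hvy : H.Adj v y) :
    (eraseVtx H v ⊔ fromEdgeSet {s(x, y)}).support ⊆ H.support \ {v} := by
  rintro a ⟨b, hb⟩
  rcases hb with hb | hb
  · exact ⟨⟨b, hb.1⟩, hb.2.1⟩
  · rw [SimpleGraph.fromEdgeSet_adj] at hb
    have := hb.1
    simp only [Set.mem_singleton_iff, Sym2.eq_iff] at this
    rcases this with ⟨rfl, rfl⟩ | ⟨rfl, rfl⟩
    · exact ⟨⟨v, hvx.symm⟩, fun h => hvx.ne (Set.mem_singleton_iff.mp h).symm⟩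
    · exact ⟨⟨v, hvy.symm⟩, fun h => hvy.ne (Set.mem_singleton_iff.mp h).symm⟩

lemma ncard_triple {v x y : V} (h1 : v ≠ x) (h2 : v ≠ y) (h3 : x ≠ y) :
    ({v, x, y} : Set V).ncard = 3 := by
  rw [Set.ncard_insert_of_notMem (by simp [h1, h2]) (Set.toFinite _),
    Set.ncard_insert_of_notMem (by simp [h3]) (Set.toFinite _), Set.ncard_singleton]

lemma hKd4 : ∀ a : Fin 4, ∃ b, (completeGraph (Fin 4)).Adj a b := by
  have : ∀ a : Fin 4, ∃ b : Fin 4, a ≠ b := by decide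
  intro a; obtain ⟨b, hb⟩ := this a; exact ⟨b, hb⟩

lemma inj4 {v x y z : V} (h1 : v ≠ x) (h2 : v ≠ y) (h3 : v ≠ z) (h4 : x ≠ y) (h5 : x ≠ z)
    (h6 : y ≠ z) : Function.Injective ![v, x, y, z] := by
  intro a b hab
  fin_cases a <;> fin_cases b <;> simp_all

lemma adj4 {H : SimpleGraph V} {v x y z : V} (hvx : H.Adj v x) (hvy : H.Adj v y)
    (hvz : H.Adj v z) (hxy : H.Adj x y) (hxz : H.Adj x z) (hyz : H.Adj y z) :
    ∀ a b : Fin 4, a ≠ b → H.Adj (![v, x, y, z] a) (![v, x, y, z] b) := by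
  have hvx' := hvx.symm; have hvy' := hvy.symm; have hvz' := hvz.symm
  have hxy' := hxy.symm; have hxz' := hxz.symm; have hyz' := hyz.symm
  intro a b hab
  fin_cases a <;> fin_cases b <;> simp_all <;> assumption

lemma lemA [Fintype V] : ∀ (m : ℕ) (H : SimpleGraph V), H.edgeSet.ncard = m → 1 ≤ m →
    2 * H.support.ncard ≤ m + 2 → ContainsSubdivision (completeGraph (Fin 4)) H := by
  intro m
  induction m using Nat.strong_induction_on with
  | _ m IH =>
  intro H hm h1 h2
  classical
  set n := H.support.ncard with hn
  obtain ⟨e0, he0⟩ : H.edgeSet.Nonempty := by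
    rw [← Set.ncard_pos (Set.toFinite _)]; omega
  have hn2 : 2 ≤ n := by
    induction e0 using Sym2.ind with
    | _ p q =>
      rw [SimpleGraph.mem_edgeSet] at he0
      have hsub : ({p, q} : Set V) ⊆ H.support := by
        rintro a (rfl | rfl)
        exacts [⟨q, he0⟩, ⟨p, he0.symm⟩]
      have : ({p, q} : Set V).ncard = 2 := by
        rw [Set.ncard_insert_of_notMem (by simp [he0.ne]) (Set.toFinite _), Set.ncard_singleton]
      rw [hn, ← this]
      exact Set.ncard_le_ncard hsub (Set.toFinite _)
  by_cases hcase : 2 * n ≤ m + 1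
  · -- trim an edge
    have hm2 : 2 ≤ m := by omega
    induction e0 using Sym2.ind with
    | _ p q =>
      refine subdiv_mono hKd4 (H.deleteEdges_le {s(p, q)}) (IH (m - 1) (by omega) _ ?_ (by omega) ?_)
      · rw [SimpleGraph.edgeSet_deleteEdges, Set.ncard_diff_singleton_of_mem he0,
          hm]
      · have hs : (H.deleteEdges {s(p, q)}).support ⊆ H.support :=
          SimpleGraph.support_mono (H.deleteEdges_le _)
        have := Set.ncard_le_ncard hs (Set.toFinite _)
        omega
  · have hmn : m + 2 = 2 * n := by omega
    obtain ⟨v, hv, hd1, hd3⟩ := exists_deg_le_three H (by omega)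
    have herase : ∀ (H'' : SimpleGraph V), 1 ≤ H''.edgeSet.ncard → H''.edgeSet.ncard < m →
        H''.support ⊆ H.support \ {v} → m ≤ H''.edgeSet.ncard + 2 →
        ContainsSubdivision (completeGraph (Fin 4)) H'' := by
      intro H'' h1' hlt hsupp hcount
      refine IH H''.edgeSet.ncard hlt _ rfl h1' ?_
      have h6 := Set.ncard_le_ncard hsupp (Set.toFinite _)
      have h7 : (H.support \ {v}).ncard = n - 1 :=
        Set.ncard_diff_singleton_of_mem hv
      omega
    have hd123 : (H.neighborSet v).ncard = 1 ∨ (H.neighborSet v).ncard = 2 ∨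
        (H.neighborSet v).ncard = 3 := by omega
    rcases hd123 with hdeq | hdeq | hdeq
    · -- degree 1
      refine subdiv_mono hKd4 (eraseVtx_le H v) (herase _ ?_ ?_
        (support_eraseVtx_subset H v) ?_) <;>
        rw [ncard_edgeSet_eraseVtx, hm, hdeq] <;> omega
    · -- degree 2
      obtain ⟨x, y, hxy, hxyset⟩ := Set.ncard_eq_two.mp hdeq
      have hvx : H.Adj v x := by rw [← SimpleGraph.mem_neighborSet, hxyset]; simp
      have hvy : H.Adj v y := by rw [← SimpleGraph.mem_neighborSet, hxyset]; simp
      have hn3 : 3 ≤ n := by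
        have hsub : ({v, x, y} : Set V) ⊆ H.support := by
          rintro a (rfl | rfl | rfl)
          exacts [⟨x, hvx⟩, ⟨v, hvx.symm⟩, ⟨v, hvy.symm⟩]
        have h8 := Set.ncard_le_ncard hsub (Set.toFinite _)
        rw [ncard_triple hvx.ne hvy.ne hxy] at h8
        omega
      by_cases hA : H.Adj x y
      · refine subdiv_mono hKd4 (eraseVtx_le H v) (herase _ ?_ ?_
          (support_eraseVtx_subset H v) ?_)
        · have hmem : s(x, y) ∈ (eraseVtx H v).edgeSet := by
            rw [SimpleGraph.mem_edgeSet, eraseVtx_adj]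
            exact ⟨hA, fun h => hvx.ne h.symm, fun h => hvy.ne h.symm⟩
          have := Set.ncard_pos (Set.toFinite _) |>.mpr ⟨_, hmem⟩
          omega
        · rw [ncard_edgeSet_eraseVtx, hm, hdeq]; omega
        · rw [ncard_edgeSet_eraseVtx, hm, hdeq]; omega
      · refine lemA_step H v x y hvx hvy hxy (herase _ ?_ ?_
          (support_step_subset H v x y hvx hvy) ?_) <;>
          rw [ncard_edgeSet_sup_single _ _ _ hxy
              (fun h => hA ((eraseVtx_adj H v x y).mp h).1),
            ncard_edgeSet_eraseVtx, hm, hdeq] <;> omega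
    · -- degree 3
      obtain ⟨x, y, z, hxy, hxz, hyz, hxyzset⟩ := Set.ncard_eq_three.mp hdeq
      have hvx : H.Adj v x := by rw [← SimpleGraph.mem_neighborSet, hxyzset]; simp
      have hvy : H.Adj v y := by rw [← SimpleGraph.mem_neighborSet, hxyzset]; simp
      have hvz : H.Adj v z := by rw [← SimpleGraph.mem_neighborSet, hxyzset]; simp
      have hn4 : 4 ≤ n := by
        have hsub : ({v, x, y, z} : Set V) ⊆ H.support := by
          rintro a (rfl | rfl | rfl | rfl)
          exacts [⟨x, hvx⟩, ⟨v, hvx.symm⟩, ⟨v, hvy.symm⟩, ⟨v, hvz.symm⟩]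
        have h8 := Set.ncard_le_ncard hsub (Set.toFinite _)
        rw [Set.ncard_insert_of_notMem (by simp [hvx.ne, hvy.ne, hvz.ne]) (Set.toFinite _),
          ncard_triple hxy hxz hyz] at h8
        omega
      by_cases hAxy : ¬H.Adj x y
      · refine lemA_step H v x y hvx hvy hxy (herase _ ?_ ?_
          (support_step_subset H v x y hvx hvy) ?_) <;>
          rw [ncard_edgeSet_sup_single _ _ _ hxy
              (fun h => hAxy ((eraseVtx_adj H v x y).mp h).1),
            ncard_edgeSet_eraseVtx, hm, hdeq] <;> omega
      by_cases hAxz : ¬H.Adj x z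
      · refine lemA_step H v x z hvx hvz hxz (herase _ ?_ ?_
          (support_step_subset H v x z hvx hvz) ?_) <;>
          rw [ncard_edgeSet_sup_single _ _ _ hxz
              (fun h => hAxz ((eraseVtx_adj H v x z).mp h).1),
            ncard_edgeSet_eraseVtx, hm, hdeq] <;> omega
      by_cases hAyz : ¬H.Adj y z
      · refine lemA_step H v y z hvy hvz hyz (herase _ ?_ ?_
          (support_step_subset H v y z hvy hvz) ?_) <;>
          rw [ncard_edgeSet_sup_single _ _ _ hyz
              (fun h => hAyz ((eraseVtx_adj H v y z).mp h).1),
            ncard_edgeSet_eraseVtx, hm, hdeq] <;> omega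
      push_neg at hAxy hAxz hAyz
      exact subdiv_of_adj ![v, x, y, z]
        (inj4 hvx.ne hvy.ne hvz.ne hxy hxz hyz)
        (fun a b hab => adj4 hvx hvy hvz hAxy hAxz hAyz a b hab.ne)

def restrictG (D : SimpleGraph V) (P : V → Prop) : SimpleGraph V where
  Adj a b := D.Adj a b ∧ P a ∧ P b
  symm := ⟨fun a b ⟨h, ha, hb⟩ => ⟨h.symm, hb, ha⟩⟩
  loopless := ⟨fun a ⟨h, _, _⟩ => D.loopless.irrefl a h⟩

lemma restrictG_le (D : SimpleGraph V) (P : V → Prop) : restrictG D P ≤ D := fun _ _ h => h.1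

lemma restrictG_adj (D : SimpleGraph V) (P : V → Prop) (a b : V) :
    (restrictG D P).Adj a b ↔ D.Adj a b ∧ P a ∧ P b := Iff.rfl

lemma support_restrictG (D : SimpleGraph V) (P : V → Prop) :
    (restrictG D P).support ⊆ {a | a ∈ D.support ∧ P a} :=
  fun _ ⟨b, hb⟩ => ⟨⟨b, hb.1⟩, hb.2.1⟩

lemma lemC [Fintype V] : ∀ (m : ℕ) (H : SimpleGraph V) (w : Sym2 V → ℕ),
    H.edgeSet.ncard = m → 1 ≤ m →
    (∀ e ∈ H.edgeSet, 1 ≤ w e ∧ w e ≤ 2) →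
    (∀ u v' : V, H.Adj u v' → w s(u, v') = 2 →
      ¬(H.deleteEdges {s(u, v')}).Reachable u v') →
    ¬ContainsSubdivision (completeGraph (Fin 4)) H →
    ∑ e ∈ H.edgeSet.toFinset, w e + 2 ≤ 2 * H.support.ncard := by
  intro m
  induction m using Nat.strong_induction_on with
  | _ m IH =>
  intro H w hm h1 hw hbr hK4
  classical
  set n := H.support.ncard with hn
  by_cases hex : ∃ e ∈ H.edgeSet, w e = 2
  · obtain ⟨e0, he0, hwe0⟩ := hex
    induction e0 using Sym2.ind with
    | _ u v =>
    rw [SimpleGraph.mem_edgeSet] at he0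
    have huv : u ≠ v := he0.ne
    set D := H.deleteEdges {s(u, v)} with hD
    have hreach : ¬D.Reachable u v := hbr u v he0 hwe0
    set A : Set V := {z | D.Reachable u z} with hA
    have huA : u ∈ A := Set.mem_setOf_eq ▸ Reachable.refl u
    have hvA : v ∉ A := hreach
    set HA := restrictG D (fun z => z ∈ A) with hHA
    set HB := restrictG D (fun z => z ∉ A) with hHB
    -- edge partition
    have hDadj : ∀ a b : V, D.Adj a b ↔ H.Adj a b ∧ s(a, b) ≠ s(u, v) := by
      intro a b
      rw [SimpleGraph.deleteEdges_adj]
      simp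
    have hclosed : ∀ a b : V, D.Adj a b → (a ∈ A ↔ b ∈ A) := by
      intro a b hab
      constructor
      · exact fun ha => ha.trans hab.reachable
      · exact fun hb => hb.trans hab.symm.reachable
    have hPart : H.edgeSet = (HA.edgeSet ∪ HB.edgeSet) ∪ {s(u, v)} := by
      ext e
      induction e using Sym2.ind with
      | _ a b =>
        simp only [Set.mem_union, Set.mem_singleton_iff, SimpleGraph.mem_edgeSet,
          restrictG_adj]
        constructor
        · intro hab
          by_cases heq : s(a, b) = s(u, v)
          · exact Or.inr heq
          · have hD' : D.Adj a b := (hDadj a b).mpr ⟨hab, heq⟩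
            by_cases haA : a ∈ A
            · exact Or.inl (Or.inl ⟨hD', haA, (hclosed a b hD').mp haA⟩)
            · exact Or.inl (Or.inr ⟨hD', haA, fun hbA => haA ((hclosed a b hD').mpr hbA)⟩)
        · rintro ((⟨hab, _⟩ | ⟨hab, _⟩) | heq)
          · exact ((hDadj a b).mp hab).1
          · exact ((hDadj a b).mp hab).1
          · rcases Sym2.eq_iff.mp heq with ⟨rfl, rfl⟩ | ⟨rfl, rfl⟩
            exacts [he0, he0.symm]
    have hdisjAB : Disjoint HA.edgeSet HB.edgeSet := by
      rw [Set.disjoint_left]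
      intro e heA heB
      induction e using Sym2.ind with
      | _ a b =>
        rw [SimpleGraph.mem_edgeSet, restrictG_adj] at heA heB
        exact heB.2.1 heA.2.1
    have hdisjE : Disjoint (HA.edgeSet ∪ HB.edgeSet) ({s(u, v)} : Set (Sym2 V)) := by
      rw [Set.disjoint_right]
      intro e he
      rw [Set.mem_singleton_iff] at he
      subst he
      rintro (hmem | hmem) <;>
      · rw [SimpleGraph.mem_edgeSet, restrictG_adj, hDadj] at hmem
        exact hmem.1.2 rfl
    -- cardinalities
    have hcardsum : HA.edgeSet.ncard + HB.edgeSet.ncard + 1 = m := by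
      rw [← hm, hPart, Set.ncard_union_eq hdisjE (Set.toFinite _) (Set.toFinite _),
        Set.ncard_union_eq hdisjAB (Set.toFinite _) (Set.toFinite _), Set.ncard_singleton]
    -- sum splits
    have hsumsplit : ∑ e ∈ H.edgeSet.toFinset, w e =
        ∑ e ∈ HA.edgeSet.toFinset, w e + ∑ e ∈ HB.edgeSet.toFinset, w e + w s(u, v) := by
      have hfin : H.edgeSet.toFinset =
          (HA.edgeSet.toFinset ∪ HB.edgeSet.toFinset) ∪ {s(u, v)} := by
        ext e
        simp only [Set.mem_toFinset, Finset.mem_union, Finset.mem_singleton, hPart]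
        simp only [Set.mem_union]
        tauto
      rw [hfin, Finset.sum_union, Finset.sum_union, Finset.sum_singleton]
      · rw [Finset.disjoint_left]
        intro e heA heB
        rw [Set.mem_toFinset] at heA heB
        exact Set.disjoint_left.mp hdisjAB heA heB
      · rw [Finset.disjoint_left]
        intro e heA heB
        rw [Finset.mem_union] at heA
        rw [Finset.mem_singleton] at heB
        rcases heA with heA | heA <;> rw [Set.mem_toFinset] at heA <;>
          exact Set.disjoint_left.mp hdisjE (by subst heB; simp [heA]) rfl
    -- supports
    have hsuppA : HA.support ⊆ H.support ∩ A := by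
      intro a ha
      obtain ⟨hd, hp⟩ := support_restrictG D _ ha
      exact ⟨SimpleGraph.support_mono (H.deleteEdges_le _) hd, hp⟩
    have hsuppB : HB.support ⊆ H.support ∩ Aᶜ := by
      intro a ha
      obtain ⟨hd, hp⟩ := support_restrictG D _ ha
      exact ⟨SimpleGraph.support_mono (H.deleteEdges_le _) hd, hp⟩
    have husupp : u ∈ H.support := ⟨v, he0⟩
    have hvsupp : v ∈ H.support := ⟨u, he0.symm⟩
    have hsuppdisj : Disjoint HA.support HB.support := by
      rw [Set.disjoint_left]
      intro a haA haB
      exact (hsuppB haB).2 (hsuppA haA).2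
    have hnAB : HA.support.ncard + HB.support.ncard ≤ n := by
      rw [← Set.ncard_union_eq hsuppdisj (Set.toFinite _) (Set.toFinite _)]
      exact Set.ncard_le_ncard (Set.union_subset (fun a ha => (hsuppA ha).1)
        (fun a ha => (hsuppB ha).1)) (Set.toFinite _)
    have hunotB : u ∉ HB.support := fun hmem => (hsuppB hmem).2 huA
    have hvnotA : v ∉ HA.support := fun hmem => hvA (hsuppA hmem).2
    -- IH helper
    have hIH : ∀ (H' : SimpleGraph V), H' ≤ H → H'.edgeSet.ncard < m → 1 ≤ H'.edgeSet.ncard →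
        ∑ e ∈ H'.edgeSet.toFinset, w e + 2 ≤ 2 * H'.support.ncard := by
      intro H' hle hlt h1'
      refine IH H'.edgeSet.ncard hlt H' w rfl h1' ?_ ?_ ?_
      · exact fun e he => hw e (SimpleGraph.edgeSet_mono hle he)
      · intro a b hab hw2
        have : ¬(H.deleteEdges {s(a, b)}).Reachable a b := hbr a b (hle hab) hw2
        intro hr
        exact this (hr.mono (fun p q hpq => by
          rw [SimpleGraph.deleteEdges_adj] at hpq ⊢
          exact ⟨hle hpq.1, hpq.2⟩))
      · exact fun hc => hK4 (subdiv_mono hKd4 hle hc)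
    have hAle : HA ≤ H := fun a b hab => ((hDadj a b).mp (restrictG_le D _ hab)).1
    have hBle : HB ≤ H := fun a b hab => ((hDadj a b).mp (restrictG_le D _ hab)).1
    by_cases hmA : 1 ≤ HA.edgeSet.ncard <;> by_cases hmB : 1 ≤ HB.edgeSet.ncard
    · have bA := hIH HA hAle (by omega) hmA
      have bB := hIH HB hBle (by omega) hmB
      omega
    · have bA := hIH HA hAle (by omega) hmA
      have hBempty : HB.edgeSet = ∅ := (Set.ncard_eq_zero (Set.toFinite _)).mp (by omega)
      have hBzero : ∑ e ∈ HB.edgeSet.toFinset, w e = 0 := by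
        rw [Set.toFinset_eq_empty.mpr hBempty]; simp
      have hins : HA.support.ncard + 1 ≤ n := by
        have hsub : insert v HA.support ⊆ H.support :=
          Set.insert_subset hvsupp (fun a ha => (hsuppA ha).1)
        have := Set.ncard_le_ncard hsub (Set.toFinite _)
        rwa [Set.ncard_insert_of_notMem hvnotA (Set.toFinite _)] at this
      omega
    · have bB := hIH HB hBle (by omega) hmB
      have hAempty : HA.edgeSet = ∅ := (Set.ncard_eq_zero (Set.toFinite _)).mp (by omega)
      have hAzero : ∑ e ∈ HA.edgeSet.toFinset, w e = 0 := by
        rw [Set.toFinset_eq_empty.mpr hAempty]; simp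
      have hins : HB.support.ncard + 1 ≤ n := by
        have hsub : insert u HB.support ⊆ H.support :=
          Set.insert_subset husupp (fun a ha => (hsuppB ha).1)
        have := Set.ncard_le_ncard hsub (Set.toFinite _)
        rwa [Set.ncard_insert_of_notMem hunotB (Set.toFinite _)] at this
      omega
    · have hAempty : HA.edgeSet = ∅ := by
        rw [← Set.ncard_eq_zero (Set.toFinite _)]; omega
      have hBempty : HB.edgeSet = ∅ := (Set.ncard_eq_zero (Set.toFinite _)).mp (by omega)
      have hAzero : ∑ e ∈ HA.edgeSet.toFinset, w e = 0 := by rw [Set.toFinset_eq_empty.mpr hAempty]; simp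
      have hBzero : ∑ e ∈ HB.edgeSet.toFinset, w e = 0 := by rw [Set.toFinset_eq_empty.mpr hBempty]; simp
      have hn2 : 2 ≤ n := by
        have hsub : ({u, v} : Set V) ⊆ H.support := by rintro a (rfl | rfl); exacts [husupp, hvsupp]
        have := Set.ncard_le_ncard hsub (Set.toFinite _)
        rwa [Set.ncard_insert_of_notMem (by simp [huv]) (Set.toFinite _),
          Set.ncard_singleton] at this
      omega
  · -- all weights one
    push_neg at hex
    have hsum : ∑ e ∈ H.edgeSet.toFinset, w e = m := by
      rw [← hm, show H.edgeSet.ncard = H.edgeSet.toFinset.card from Set.ncard_eq_toFinset_card' _,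
        Finset.card_eq_sum_ones]
      refine Finset.sum_congr rfl (fun e he => ?_)
      rw [Set.mem_toFinset] at he
      have := hw e he
      have := hex e he
      omega
    have hbound : m + 3 ≤ 2 * n := by
      by_contra hcon
      exact hK4 (lemA m H hm h1 (by omega))
    omega

private noncomputable def k23w (G : SimpleGraph V) (p q t₁ t₂ t₀ : V)
    (hp1 : G.Adj p t₁) (hq1 : G.Adj q t₁) (hp2 : G.Adj p t₂) (hq2 : G.Adj q t₂)
    (hp0 : G.Adj p t₀) (P : G.Walk q t₀) :
    ∀ a b, (completeBipartiteGraph (Fin 2) (Fin 3)).Adj a b →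
      G.Walk (Sum.elim ![p, q] ![t₁, t₂, t₀] a) (Sum.elim ![p, q] ![t₁, t₂, t₀] b)
  | Sum.inl ⟨0, _⟩, Sum.inr ⟨0, _⟩, _ => Walk.cons hp1 Walk.nil
  | Sum.inl ⟨0, _⟩, Sum.inr ⟨1, _⟩, _ => Walk.cons hp2 Walk.nil
  | Sum.inl ⟨0, _⟩, Sum.inr ⟨2, _⟩, _ => Walk.cons hp0 Walk.nil
  | Sum.inl ⟨1, _⟩, Sum.inr ⟨0, _⟩, _ => Walk.cons hq1 Walk.nil
  | Sum.inl ⟨1, _⟩, Sum.inr ⟨1, _⟩, _ => Walk.cons hq2 Walk.nil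
  | Sum.inl ⟨1, _⟩, Sum.inr ⟨2, _⟩, _ => P
  | Sum.inr ⟨0, _⟩, Sum.inl ⟨0, _⟩, _ => (Walk.cons hp1 Walk.nil).reverse
  | Sum.inr ⟨1, _⟩, Sum.inl ⟨0, _⟩, _ => (Walk.cons hp2 Walk.nil).reverse
  | Sum.inr ⟨2, _⟩, Sum.inl ⟨0, _⟩, _ => (Walk.cons hp0 Walk.nil).reverse
  | Sum.inr ⟨0, _⟩, Sum.inl ⟨1, _⟩, _ => (Walk.cons hq1 Walk.nil).reverse
  | Sum.inr ⟨1, _⟩, Sum.inl ⟨1, _⟩, _ => (Walk.cons hq2 Walk.nil).reverse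
  | Sum.inr ⟨2, _⟩, Sum.inl ⟨1, _⟩, _ => P.reverse
  | Sum.inl _, Sum.inl _, h => absurd h (by simp)
  | Sum.inr _, Sum.inr _, h => absurd h (by simp)
  | Sum.inl ⟨_+2, h⟩, _, _ => absurd h (by omega)
  | _, Sum.inl ⟨_+2, h⟩, _ => absurd h (by omega)
  | Sum.inr ⟨_+3, h⟩, _, _ => absurd h (by omega)
  | _, Sum.inr ⟨_+3, h⟩, _ => absurd h (by omega)


lemma inj23 {p q t₁ t₂ t₀ : V} (h1 : p ≠ q) (h2 : p ≠ t₁) (h3 : p ≠ t₂) (h4 : p ≠ t₀)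
    (h5 : q ≠ t₁) (h6 : q ≠ t₂) (h7 : q ≠ t₀) (h8 : t₁ ≠ t₂) (h9 : t₁ ≠ t₀) (h10 : t₂ ≠ t₀) :
    Function.Injective (Sum.elim ![p, q] ![t₁, t₂, t₀]) := by
  intro a b hab
  rcases a with ⟨(_ | _ | i), ha⟩ | ⟨(_ | _ | _ | j), hb⟩ <;>
    rcases b with ⟨(_ | _ | i'), ha'⟩ | ⟨(_ | _ | _ | j'), hb'⟩ <;>
    first | omega | simp_all

lemma range23 (p q t₁ t₂ t₀ : V) :
    Set.range (Sum.elim ![p, q] ![t₁, t₂, t₀]) = {p, q, t₁, t₂, t₀} := by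
  ext x
  constructor
  · rintro ⟨(⟨(_ | _ | i), ha⟩ | ⟨(_ | _ | _ | j), hb⟩), rfl⟩ <;> first | omega | simp
  · rintro (rfl | rfl | rfl | rfl | rfl)
    exacts [⟨Sum.inl 0, rfl⟩, ⟨Sum.inl 1, rfl⟩, ⟨Sum.inr 0, rfl⟩, ⟨Sum.inr 1, rfl⟩,
      ⟨Sum.inr 2, rfl⟩]

lemma k23_subdiv (G : SimpleGraph V) (p q t₁ t₂ t₀ : V)
    (hpq : p ≠ q) (h12 : t₁ ≠ t₂) (h01 : t₀ ≠ t₁) (h02 : t₀ ≠ t₂) (h0q : t₀ ≠ q)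
    (hp1 : G.Adj p t₁) (hq1 : G.Adj q t₁) (hp2 : G.Adj p t₂) (hq2 : G.Adj q t₂)
    (hp0 : G.Adj p t₀)
    (P : G.Walk q t₀) (hP : P.IsPath)
    (hPp : p ∉ P.support) (hP1 : t₁ ∉ P.support) (hP2 : t₂ ∉ P.support) :
    ContainsSubdivision (completeBipartiteGraph (Fin 2) (Fin 3)) G := by
  have hsupshort : ∀ a b (h : (completeBipartiteGraph (Fin 2) (Fin 3)).Adj a b),
      ∀ x ∈ (k23w G p q t₁ t₂ t₀ hp1 hq1 hp2 hq2 hp0 P a b h).support,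
        x ∈ ({p, q, t₁, t₂, t₀} : Set V) ∨
        (x ∈ P.support ∧ s(a, b) = s(Sum.inl 1, Sum.inr 2)) := by
    rintro (⟨(_ | _ | i), ha⟩ | ⟨(_ | _ | _ | j), hb⟩)
      (⟨(_ | _ | i'), ha'⟩ | ⟨(_ | _ | _ | j'), hb'⟩) h x hx <;>
      first
      | omega
      | (refine absurd h ?_; simp; done)
      | (simp only [k23w] at hx
         first
         | (refine Or.inr ⟨?_, ?_⟩
            · first
              | simpa using hx
              | (rw [Walk.support_reverse, List.mem_reverse] at hx; simpa using hx)
            · simp)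
         | (left
            rcases (by simpa using hx : _ ∨ _) with rfl | rfl <;> simp))
  refine ⟨Sum.elim ![p, q] ![t₁, t₂, t₀], k23w G p q t₁ t₂ t₀ hp1 hq1 hp2 hq2 hp0 P,
    inj23 hpq hp1.ne hp2.ne hp0.ne hq1.ne hq2.ne (Ne.symm h0q) h12
      (Ne.symm h01) (Ne.symm h02), ?_, ?_, ?_⟩
  · rintro (⟨(_ | _ | i), ha⟩ | ⟨(_ | _ | _ | j), hb⟩)
      (⟨(_ | _ | i'), ha'⟩ | ⟨(_ | _ | _ | j'), hb'⟩) h <;>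
      first
      | omega
      | (refine absurd h ?_; simp; done)
      | (simp only [k23w]
         first
         | exact hP
         | exact hP.reverse
         | (simp [Walk.isPath_def, hp1.ne, hp2.ne, hp0.ne, hq1.ne, hq2.ne, hp1.ne', hp2.ne', hp0.ne', hq1.ne', hq2.ne']))
  · rintro (⟨(_ | _ | i), ha⟩ | ⟨(_ | _ | _ | j), hb⟩)
      (⟨(_ | _ | i'), ha'⟩ | ⟨(_ | _ | _ | j'), hb'⟩) h x hx hxr <;>
      first
      | omega
      | (refine absurd h ?_; simp; done)
      | (simp only [k23w] at hx
         first
         | (rcases (by simpa using hx : _ ∨ _) with rfl | rfl <;> simp)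
         | (rw [range23] at hxr
            have hxP : x ∈ P.support := by
              first
              | simpa using hx
              | (rw [Walk.support_reverse, List.mem_reverse] at hx; simpa using hx)
            rcases hxr with rfl | rfl | rfl | rfl | rfl
            · exact absurd hxP hPp
            · simp
            · exact absurd hxP hP1
            · exact absurd hxP hP2
            · simp))
  · intro a b c d h₁ h₂ hne x hx₁ hx₂
    rw [range23]
    rcases hsupshort a b h₁ x hx₁ with hr | ⟨_, he1⟩
    · exact hr
    rcases hsupshort c d h₂ x hx₂ with hr | ⟨_, he2⟩
    · exact hr
    rw [he1, he2] at hne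
    exact absurd rfl hne

lemma adj23 {G : SimpleGraph V} {u v t₁ t₂ t₃ : V}
    (h1 : G.Adj u t₁) (h2 : G.Adj u t₂) (h3 : G.Adj u t₃)
    (h4 : G.Adj v t₁) (h5 : G.Adj v t₂) (h6 : G.Adj v t₃) :
    ∀ a b, (completeBipartiteGraph (Fin 2) (Fin 3)).Adj a b →
      G.Adj (Sum.elim ![u, v] ![t₁, t₂, t₃] a) (Sum.elim ![u, v] ![t₁, t₂, t₃] b) := by
  have h1' := h1.symm; have h2' := h2.symm; have h3' := h3.symm
  have h4' := h4.symm; have h5' := h5.symm; have h6' := h6.symm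
  rintro (⟨(_ | _ | i), ha⟩ | ⟨(_ | _ | _ | j), hb⟩)
    (⟨(_ | _ | i'), ha'⟩ | ⟨(_ | _ | _ | j'), hb'⟩) h <;>
    first
    | omega
    | (refine absurd h ?_; simp; done)
    | (simp only [Sum.elim_inl, Sum.elim_inr]
       first
       | exact h1 | exact h2 | exact h3 | exact h4 | exact h5 | exact h6
       | exact h1' | exact h2' | exact h3' | exact h4' | exact h5' | exact h6'
       | (simp only [show (⟨0+1+1, hb'⟩ : Fin 3) = 2 from rfl]; assumption))

end Aux

/-- If `S` is a 2-dominating set of an outerplanar graph with `x = |S|` and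
`y = |V \ S|`, then `y ≤ 2x - 2`. -/
theorem twoDom_complement_bound [Fintype V] (G : SimpleGraph V)
    (hG : Outerplanar G) (hn : 3 ≤ Fintype.card V)
    (S : Set V) (hS : TwoDom G S) :
    (Sᶜ : Set V).ncard + 2 ≤ 2 * S.ncard := by
  classical
  have hSne : S.Nonempty := by
    rcases S.eq_empty_or_nonempty with rfl | h
    · exfalso
      have : 0 < Fintype.card V := by omega
      obtain ⟨v⟩ := Fintype.card_pos_iff.mp this
      have := hS v (by simp)
      simp at this
    · exact h
  have hx1 : 1 ≤ S.ncard := (Set.ncard_pos (Set.toFinite _)).mpr hSne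
  have hch : ∀ t : V, t ∉ S → ∃ p q : V, p ≠ q ∧ (p ∈ S ∧ G.Adj t p) ∧ (q ∈ S ∧ G.Adj t q) := by
    intro t ht
    have h2 := hS t ht
    obtain ⟨p, q, hp, hq, hpq⟩ :=
      (Set.one_lt_ncard_iff (s := S ∩ G.neighborSet t) (Set.toFinite _)).mp (by omega)
    exact ⟨p, q, hpq, ⟨hp.1, hp.2⟩, ⟨hq.1, hq.2⟩⟩
  choose! pa pb hprop using hch
  set F : V → Sym2 V := fun t => s(pa t, pb t) with hF
  set H : SimpleGraph V :=
    { Adj := fun u w => u ≠ w ∧ ∃ t, t ∉ S ∧ F t = s(u, w)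
      symm := ⟨by rintro u w ⟨h, t, ht, hFt⟩; exact ⟨h.symm, t, ht, hFt.trans Sym2.eq_swap⟩⟩
      loopless := ⟨fun u h => h.1 rfl⟩ } with hH
  have hFprop : ∀ t, t ∉ S → ∀ u w : V, F t = s(u, w) →
      (u ∈ S ∧ G.Adj t u) ∧ (w ∈ S ∧ G.Adj t w) := by
    intro t ht u w hFt
    obtain ⟨hne, hu', hw'⟩ := hprop t ht
    rw [hF] at hFt
    rcases Sym2.eq_iff.mp hFt with ⟨h1, h2⟩ | ⟨h1, h2⟩
    · rw [← h1, ← h2]; exact ⟨hu', hw'⟩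
    · rw [← h1, ← h2]; exact ⟨hw', hu'⟩
  have hadjS : ∀ u w, H.Adj u w → u ∈ S ∧ w ∈ S := by
    rintro u w ⟨hne, t, ht, hFt⟩
    exact ⟨(hFprop t ht u w hFt).1.1, (hFprop t ht u w hFt).2.1⟩
  have hsupp : H.support ⊆ S := fun u ⟨w, hw⟩ => (hadjS u w hw).1
  have hedget : ∀ t, t ∉ S → F t ∈ H.edgeSet := by
    intro t ht
    obtain ⟨hne, hu', hw'⟩ := hprop t ht
    have : H.Adj (pa t) (pb t) := ⟨hne, t, ht, rfl⟩
    exact this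
  set midH : Sym2 V → Option V :=
    fun e => if h : ∃ t, t ∉ S ∧ F t = e then some h.choose else none with hmid
  have hmid1 : ∀ e t, midH e = some t → t ∉ S ∧ F t = e := by
    intro e t ht
    rw [hmid] at ht
    dsimp only at ht
    split at ht
    · rename_i h
      have := h.choose_spec
      rwa [Option.some_inj.mp ht] at this
    · cases ht
  have hmidsome : ∀ u v : V, H.Adj u v → ∃ t, midH s(u, v) = some t := by
    rintro u v ⟨hne, t, ht, hFt⟩
    have hex : ∃ t', t' ∉ S ∧ F t' = s(u, v) := ⟨t, ht, hFt⟩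
    exact ⟨hex.choose, by rw [hmid]; dsimp only; exact dif_pos hex⟩
  have hmgood : GoodMid G H midH := by
    intro a b hab
    obtain ⟨t, ht⟩ := hmidsome a b hab
    rw [ht]
    obtain ⟨htS, hFt⟩ := hmid1 _ _ ht
    obtain ⟨⟨_, h1⟩, ⟨_, h2⟩⟩ := hFprop _ htS a b hFt
    exact ⟨h1.symm, h2⟩
  have hminj : ∀ e ∈ H.edgeSet, ∀ e' ∈ H.edgeSet, ∀ t, midH e = some t → midH e' = some t →
      e = e' := by
    intro e _ e' _ t ht ht'
    rw [← (hmid1 e t ht).2, ← (hmid1 e' t ht').2]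
  have hK4 : ¬ ContainsSubdivision (completeGraph (Fin 4)) H := by
    intro hc
    exact hG.1 (subdiv_expand hmgood hKd4
      (fun e t ht hmem => (hmid1 e t ht).1 (hsupp hmem)) hminj hc)
  set w : Sym2 V → ℕ := fun e => {t | t ∉ S ∧ F t = e}.ncard with hww
  have hy : (Sᶜ : Set V).ncard = ∑ e ∈ H.edgeSet.toFinset, w e := by
    rw [Set.ncard_eq_toFinset_card' _]
    rw [Finset.card_eq_sum_card_fiberwise (f := F) (t := H.edgeSet.toFinset)
      (fun t ht => by
        rw [Finset.mem_coe, Set.mem_toFinset] at ht ⊢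
        exact hedget t ht)]
    refine Finset.sum_congr rfl (fun e he => ?_)
    show _ = ({t | t ∉ S ∧ F t = e}).ncard
    rw [Set.ncard_eq_toFinset_card' _]
    congr 1
    ext t
    simp
  have hwlb : ∀ e ∈ H.edgeSet, 1 ≤ w e ∧ w e ≤ 2 := by
    intro e he
    induction e using Sym2.ind with
    | _ u v =>
    rw [SimpleGraph.mem_edgeSet] at he
    obtain ⟨hne, t, ht, hFt⟩ := he
    constructor
    · rw [hww]
      exact (Set.ncard_pos (Set.toFinite _)).mpr ⟨t, ht, hFt⟩
    · by_contra hgt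
      push_neg at hgt
      have hgt' : 2 < {t' | t' ∉ S ∧ F t' = s(u, v)}.ncard := by simpa [hww] using hgt
      obtain ⟨fib3, hfibsub, hfib3⟩ := Set.exists_subset_card_eq (s := {t' | t' ∉ S ∧ F t' = s(u, v)}) (n := 3)
        (by omega)
      obtain ⟨t₁, t₂, t₃, h12, h13, h23, rfl⟩ := Set.ncard_eq_three.mp hfib3
      have m1 := hfibsub (by simp : t₁ ∈ ({t₁, t₂, t₃} : Set V))
      have m2 := hfibsub (by simp : t₂ ∈ ({t₁, t₂, t₃} : Set V))
      have m3 := hfibsub (by simp : t₃ ∈ ({t₁, t₂, t₃} : Set V))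
      obtain ⟨⟨huS, hu1⟩, ⟨hvS, hv1⟩⟩ := hFprop t₁ m1.1 u v m1.2
      obtain ⟨⟨_, hu2⟩, ⟨_, hv2⟩⟩ := hFprop t₂ m2.1 u v m2.2
      obtain ⟨⟨_, hu3⟩, ⟨_, hv3⟩⟩ := hFprop t₃ m3.1 u v m3.2
      refine hG.2 (subdiv_of_adj (Sum.elim ![u, v] ![t₁, t₂, t₃]) ?_ ?_)
      · exact inj23 hne (fun h => m1.1 (h ▸ huS)) (fun h => m2.1 (h ▸ huS))
          (fun h => m3.1 (h ▸ huS)) (fun h => m1.1 (h ▸ hvS)) (fun h => m2.1 (h ▸ hvS))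
          (fun h => m3.1 (h ▸ hvS)) h12 h13 h23
      · exact adj23 hu1.symm hu2.symm hu3.symm hv1.symm hv2.symm hv3.symm
  have hbr : ∀ u v : V, H.Adj u v → w s(u, v) = 2 →
      ¬(H.deleteEdges {s(u, v)}).Reachable u v := by
    intro u v huv hw2 hreach
    have huvne : u ≠ v := huv.ne
    obtain ⟨huS, hvS⟩ := hadjS u v huv
    obtain ⟨t₁, t₂, h12, hfib⟩ := Set.ncard_eq_two.mp (hww ▸ hw2)
    have m1 : t₁ ∉ S ∧ F t₁ = s(u, v) := by
      have : t₁ ∈ {t' | t' ∉ S ∧ F t' = s(u, v)} := by rw [hfib]; simp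
      exact this
    have m2 : t₂ ∉ S ∧ F t₂ = s(u, v) := by
      have : t₂ ∈ {t' | t' ∉ S ∧ F t' = s(u, v)} := by rw [hfib]; simp
      exact this
    set D := H.deleteEdges {s(u, v)} with hD
    have hDle : D ≤ H := H.deleteEdges_le _
    have hmgoodD : GoodMid G D midH := fun a b hab => hmgood (hDle hab)
    obtain ⟨q₀⟩ := hreach
    obtain ⟨q, hq⟩ := q₀.toPath
    cases q with
    | nil => exact huvne rfl
    | @cons _ z _ hz rest =>
      rw [hD, SimpleGraph.deleteEdges_adj] at hz
      have hzadj : H.Adj u z := hz.1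
      have hzne : s(u, z) ≠ s(u, v) := by simpa using hz.2
      have hzS : z ∈ S := (hadjS u z hzadj).2
      rw [Walk.cons_isPath_iff] at hq
      -- middle vertex of the first edge
      obtain ⟨t₀, ht₀⟩ := hmidsome u z hzadj
      obtain ⟨ht₀S, hFt₀⟩ := hmid1 _ _ ht₀
      have hadj0 : G.Adj t₀ u ∧ G.Adj t₀ z := by
        obtain ⟨⟨_, h1⟩, ⟨_, h2⟩⟩ := hFprop t₀ ht₀S u z hFt₀
        exact ⟨h1, h2⟩
      -- support of walks in D lies in S
      have hrestS : ∀ x ∈ rest.support, x ∈ S := by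
        intro x hx
        rcases walk_support_mem_graph_support' rest hx with hsx | rfl
        · exact hsupp (SimpleGraph.support_mono hDle hsx)
        · exact hvS
      -- the expanded walk
      set Q := expandWalk hmgoodD rest with hQ
      have hQsup : ∀ x, x ∈ Q.support ↔
          x ∈ rest.support ∨ ∃ e ∈ rest.edges, midH e = some x :=
        fun x => mem_support_expandWalk hmgoodD rest x
      have hedgeD : ∀ e ∈ rest.edges, e ≠ s(u, v) ∧ e ∈ H.edgeSet := by
        intro e he
        have := rest.edges_subset_edgeSet he
        rw [hD, SimpleGraph.edgeSet_deleteEdges] at this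
        exact ⟨by simpa using this.2, this.1⟩
      have hQpath : Q.IsPath := by
        refine isPath_expandWalk hmgoodD hq.1 (fun e he t ht => ?_)
        constructor
        · intro hts
          exact (hmid1 e t ht).1 (hrestS t hts)
        · intro e' he' ht'
          exact hminj e' (hedgeD e' he').2 e (hedgeD e he).2 t ht' ht
      -- t₀ not in Q's support
      have ht₀Q : t₀ ∉ Q.support := by
        rw [hQsup]
        rintro (hts | ⟨e, he, hme⟩)
        · exact ht₀S (hrestS t₀ hts)
        · have : e = s(u, z) := by rw [← (hmid1 e t₀ hme).2, hFt₀]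
          subst this
          exact hq.2 (rest.fst_mem_support_of_mem_edges he)
      -- middles of Q are distinct from t₁, t₂ and not u
      have hmidQ : ∀ x, x ∈ Q.support → x ∈ S ∨ (x ∉ S ∧ F x ∈ rest.edges) := by
        intro x hx
        rw [hQsup] at hx
        rcases hx with hts | ⟨e, he, hme⟩
        · exact Or.inl (hrestS x hts)
        · obtain ⟨hxS, hFx⟩ := hmid1 e x hme
          exact Or.inr ⟨hxS, hFx ▸ he⟩
      have ht1Q : t₁ ∉ Q.support := by
        intro hmem
        rcases hmidQ t₁ hmem with hsx | ⟨_, hFx⟩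
        · exact m1.1 hsx
        · rw [m1.2] at hFx
          exact (hedgeD _ hFx).1 rfl
      have ht2Q : t₂ ∉ Q.support := by
        intro hmem
        rcases hmidQ t₂ hmem with hsx | ⟨_, hFx⟩
        · exact m2.1 hsx
        · rw [m2.2] at hFx
          exact (hedgeD _ hFx).1 rfl
      have huQ : u ∉ Q.support := by
        intro hmem
        rcases hmidQ u hmem with hsx | ⟨huS', _⟩
        · rw [hQsup] at hmem
          rcases hmem with hts | ⟨e, he, hme⟩
          · exact hq.2 hts
          · exact (hmid1 e u hme).1 huS
        · exact huS' huS
      -- assemble the path P : G.Walk v t₀ (reversed)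
      have hP0 : (Walk.cons hadj0.2 Q : G.Walk t₀ v).IsPath := by
        rw [Walk.cons_isPath_iff]
        exact ⟨hQpath, ht₀Q⟩
      set P : G.Walk v t₀ := (Walk.cons hadj0.2 Q).reverse with hP
      have hPsup : ∀ x, x ∈ P.support ↔ x = t₀ ∨ x ∈ Q.support := by
        intro x
        rw [hP, Walk.support_reverse, List.mem_reverse, Walk.support_cons]
        simp
      -- distinctness facts
      have ht01 : t₀ ≠ t₁ := by
        intro h
        rw [← h, hFt₀] at m1
        exact hzne m1.2
      have ht02 : t₀ ≠ t₂ := by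
        intro h
        rw [← h, hFt₀] at m2
        exact hzne m2.2
      obtain ⟨⟨_, hu1⟩, ⟨_, hv1⟩⟩ := hFprop t₁ m1.1 u v m1.2
      obtain ⟨⟨_, hu2⟩, ⟨_, hv2⟩⟩ := hFprop t₂ m2.1 u v m2.2
      refine hG.2 (k23_subdiv G u v t₁ t₂ t₀ huvne h12 ht01 ht02
        (fun h => ht₀S (h ▸ hvS)) hu1.symm hv1.symm hu2.symm hv2.symm hadj0.1.symm
        P (hP ▸ hP0.reverse) ?_ ?_ ?_)
      · rw [hPsup]
        rintro (rfl | hmem)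
        · exact ht₀S huS
        · exact huQ hmem
      · rw [hPsup]
        rintro (h | hmem)
        · exact ht01 h.symm
        · exact ht1Q hmem
      · rw [hPsup]
        rintro (h | hmem)
        · exact ht02 h.symm
        · exact ht2Q hmem
  rcases Nat.eq_zero_or_pos H.edgeSet.ncard with h0 | h1
  · have hSc : Sᶜ = (∅ : Set V) := by
      by_contra hnem
      obtain ⟨t, ht⟩ := Set.nonempty_iff_ne_empty.mpr hnem
      have : H.edgeSet.Nonempty := ⟨F t, hedget t ht⟩
      rw [← Set.ncard_pos (Set.toFinite _)] at this
      omega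
    rw [hSc, Set.ncard_empty]
    omega
  · have hb := lemC H.edgeSet.ncard H w rfl h1 hwlb hbr hK4
    have hsc := Set.ncard_le_ncard hsupp (Set.toFinite _)
    have hb2 : ∑ e ∈ H.edgeSet.toFinset, w e + 2 ≤ 2 * H.support.ncard := by
      first
      | exact hb
      | (convert hb using 4 <;> first | rfl | exact Subsingleton.elim _ _)
      | (convert hb using 3 <;> first | rfl | exact Subsingleton.elim _ _)
    omega
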